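/- Let T > 0, let L : E →ₗ[ℂ] E be a fixed (time-independent) linear operator, and let v : ℝ → E be differentiable on [0,T] with ‖v t‖ = 1, satisfying v'(t) = L (v t) − Re⟨v t, L (v t)⟩ • v t for all t ∈ [0,T]. Then Real.arccos ‖⟨v 0, v T⟩‖ ≤ T·‖L‖, where ‖L‖ is the operator norm of L. -/

import Mathlib

open Real Set

lemma auxA {F : Type*} [NormedAddCommGroup F] [InnerProductSpace ℝ F]
    (a b x : F) (ha : ‖a‖ = 1) (hb : ‖b‖ = 1) (hbx : inner ℝ b x = (0:ℝ)) :
    |(inner ℝ a x : ℝ)| ≤ ‖x‖ * Real.sqrt (1 - (inner ℝ a b : ℝ)^2) := by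
  set f : ℝ := inner ℝ a b with hf
  have h1 : (inner ℝ a x : ℝ) = inner ℝ (a - f • b) x := by
    rw [inner_sub_left, real_inner_smul_left, hbx]; ring
  have h2 : ‖a - f • b‖^2 = 1 - f^2 := by
    rw [norm_sub_sq_real, real_inner_smul_right, norm_smul, ha, hb]
    rw [Real.norm_eq_abs]
    nlinarith [sq_abs f]
  have h3 : ‖a - f • b‖ = Real.sqrt (1 - f^2) := by
    rw [← h2, Real.sqrt_sq (norm_nonneg _)]
  calc |(inner ℝ a x : ℝ)| = |(inner ℝ (a - f • b) x : ℝ)| := by rw [h1]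
    _ ≤ ‖a - f • b‖ * ‖x‖ := abs_real_inner_le_norm _ _
    _ = ‖x‖ * Real.sqrt (1 - f^2) := by rw [h3]; ring

lemma auxAlg (k f D Q R c s : ℝ) (hk : 0 ≤ k) (hf0 : 0 ≤ f) (hQ : 0 ≤ Q)
    (hQR : Q ≤ R) (hR : 0 < R) (hc : 0 ≤ c) (hs : 0 ≤ s) (hD : |D| ≤ k * Q) :
    0 ≤ D * (c + f * s / R) + k * (f * s + R * c) := by
  have hcoef : 0 ≤ c + f * s / R := by positivity
  have h1 : -(k * Q) * (c + f * s / R) ≤ D * (c + f * s / R) := by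
    apply mul_le_mul_of_nonneg_right _ hcoef
    linarith [neg_abs_le D]
  have h2 : 0 ≤ k * (f * s + R * c) - k * Q * (c + f * s / R) := by
    have key : k * (f * s + R * c) - k * Q * (c + f * s / R)
        = k * (c * (R - Q) + f * s * ((R - Q) / R)) := by
      field_simp
      ring
    rw [key]
    have hRQ : 0 ≤ R - Q := sub_nonneg.2 hQR
    have h3 : 0 ≤ (R - Q) / R := div_nonneg hRQ hR.le
    have := mul_nonneg (mul_nonneg hf0 hs) h3
    have := mul_nonneg hc hRQ
    positivity
  nlinarith

lemma auxB (k T : ℝ) (hk : 0 ≤ k) (hT : 0 < T) (hkT : k * T < π / 2)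
    (f D : ℝ → ℝ) (hf0 : f 0 = 1)
    (hd : ∀ t ∈ Icc (0:ℝ) T, HasDerivAt f (D t) t)
    (hDb : ∀ t ∈ Icc (0:ℝ) T, |D t| ≤ k * Real.sqrt (1 - f t ^ 2))
    (hb : ∀ t ∈ Icc (0:ℝ) T, |f t| ≤ 1) :
    Real.cos (k * T) ≤ f T := by
  rcases hk.eq_or_lt with hk0 | hkpos
  · -- k = 0 : f is constant
    have hDz : ∀ t ∈ Icc (0:ℝ) T, D t = 0 := by
      intro t ht
      have h := hDb t ht
      rw [← hk0, zero_mul] at h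
      exact abs_nonpos_iff.1 h
    have hconst : ‖f T - f 0‖ ≤ 0 * ‖T - 0‖ := by
      apply Convex.norm_image_sub_le_of_norm_hasDerivWithin_le
        (f' := D) (fun x hx => (hd x hx).hasDerivWithinAt)
        (fun x hx => by rw [hDz x hx]; simp) (convex_Icc 0 T)
        (by constructor <;> simp [hT.le]) (by constructor <;> simp [hT.le])
    have hfT : f T = 1 := by
      simp only [zero_mul, norm_eq_abs] at hconst
      have h0 : f T - f 0 = 0 := abs_nonpos_iff.1 hconst
      linarith
    rw [hfT, ← hk0, zero_mul]
    exact Real.cos_le_one 0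
  · -- main case: k > 0
    by_contra hcon
    push_neg at hcon
    set g := Real.cos (k * T) with hgdef
    have hkT0 : 0 < k * T := mul_pos hkpos hT
    have hg0 : 0 < g := Real.cos_pos_of_mem_Ioo ⟨by linarith [Real.pi_div_two_pos], hkT⟩
    have hg1 : g < 1 := by
      have := Real.strictAntiOn_cos (left_mem_Icc.2 Real.pi_pos.le)
        ⟨hkT0.le, by linarith [Real.pi_div_two_pos, Real.pi_pos]⟩ hkT0
      simpa using this
    have hfc : ContinuousOn f (Icc 0 T) := fun t ht => (hd t ht).continuousAt.continuousWithinAt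
    have hScl : IsClosed (Icc 0 T ∩ f ⁻¹' Iic g) :=
      hfc.preimage_isClosed_of_isClosed isClosed_Icc isClosed_Iic
    have hSne : (Icc 0 T ∩ f ⁻¹' Iic g).Nonempty :=
      ⟨T, ⟨right_mem_Icc.2 hT.le, hcon.le⟩⟩
    have hSbd : BddBelow (Icc 0 T ∩ f ⁻¹' Iic g) := ⟨0, fun t ht => ht.1.1⟩
    set t₁ := sInf (Icc 0 T ∩ f ⁻¹' Iic g) with ht₁def
    have ht₁S : t₁ ∈ Icc 0 T ∩ f ⁻¹' Iic g := hScl.csInf_mem hSne hSbd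
    have ht₁0 : 0 ≤ t₁ := ht₁S.1.1
    have ht₁T : t₁ ≤ T := ht₁S.1.2
    have hlt : ∀ t, 0 ≤ t → t < t₁ → g < f t := by
      intro t h0 hltt
      by_contra hle
      push_neg at hle
      have htS : t ∈ Icc 0 T ∩ f ⁻¹' Iic g := ⟨⟨h0, hltt.le.trans ht₁T⟩, hle⟩
      exact absurd (csInf_le hSbd htS) (not_le.2 hltt)
    have ht₁pos : 0 < t₁ := by
      rcases ht₁0.eq_or_lt with h | h
      · exfalso
        have : f t₁ ≤ g := ht₁S.2
        rw [← h, hf0] at this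
        linarith
      · exact h
    have hft₁ : f t₁ = g := by
      refine le_antisymm ht₁S.2 ?_
      have hcont : ContinuousAt f t₁ := (hd t₁ ht₁S.1).continuousAt
      refine ge_of_tendsto (hcont.tendsto.mono_left (nhdsWithin_le_nhds (s := Iio t₁))) ?_
      filter_upwards [Ioo_mem_nhdsLT_of_mem (show t₁ ∈ Ioc 0 t₁ from ⟨ht₁pos, le_refl _⟩)]
        with t ht
      exact (hlt t ht.1.le ht.2).le
    have hsub : Icc (0:ℝ) t₁ ⊆ Icc 0 T := Icc_subset_Icc le_rfl ht₁T
    have hfpos : ∀ t ∈ Icc (0:ℝ) t₁, 0 ≤ f t := by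
      intro t ht
      rcases ht.2.lt_or_eq with h | h
      · exact hg0.le.trans (hlt t ht.1 h).le
      · rw [h, hft₁]; exact hg0.le
    have key : ∀ ε : ℝ, 0 < ε → Real.cos (k * t₁) - ε ≤ f t₁ := by
      intro ε hε
      set R : ℝ → ℝ := fun t => Real.sqrt (1 - f t ^ 2 + ε ^ 2) with hRdef
      set φ : ℝ → ℝ :=
        fun t => f t * Real.cos (k * (t₁ - t)) - R t * Real.sin (k * (t₁ - t)) with hφdef
      have hArg : ∀ t ∈ Icc (0:ℝ) T, (0:ℝ) < 1 - f t ^ 2 + ε ^ 2 := by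
        intro t ht
        have h1 := hb t ht
        have h2 := abs_le.1 h1
        nlinarith
      have hRpos : ∀ t ∈ Icc (0:ℝ) T, 0 < R t := fun t ht => Real.sqrt_pos.2 (hArg t ht)
      have hu : ∀ t : ℝ, HasDerivAt (fun s => k * (t₁ - s)) (-k) t := by
        intro t
        have h1 : HasDerivAt (fun s : ℝ => t₁ - s) (-1) t := by
          simpa using (hasDerivAt_id t).const_sub t₁
        have := h1.const_mul k
        exact this.congr_deriv (by ring)
      have hcos : ∀ t : ℝ, HasDerivAt (fun s => Real.cos (k * (t₁ - s)))
          (k * Real.sin (k * (t₁ - t))) t := by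
        intro t
        have := (hu t).cos
        convert this using 1
        ring
      have hsin : ∀ t : ℝ, HasDerivAt (fun s => Real.sin (k * (t₁ - s)))
          (-(k * Real.cos (k * (t₁ - t)))) t := by
        intro t
        have := (hu t).sin
        convert this using 1
        ring
      have hRd : ∀ t ∈ Icc (0:ℝ) T, HasDerivAt R
          ((-(2 * f t * D t)) / (2 * R t)) t := by
        intro t ht
        have hsq : HasDerivAt (fun s => 1 - f s ^ 2 + ε ^ 2) (-(2 * f t * D t)) t := by
          have h1 := (hd t ht).pow 2
          have h2 := h1.const_sub 1
          have h3 := h2.add_const (ε ^ 2)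
          exact h3.congr_deriv (by push_cast; ring)
        have := hsq.sqrt (ne_of_gt (hArg t ht))
        exact this
      have hφd : ∀ t ∈ Icc (0:ℝ) T, HasDerivAt φ
          ((D t * Real.cos (k * (t₁ - t)) + f t * (k * Real.sin (k * (t₁ - t))))
            - ((-(2 * f t * D t)) / (2 * R t) * Real.sin (k * (t₁ - t))
              + R t * (-(k * Real.cos (k * (t₁ - t)))))) t := by
        intro t ht
        exact ((hd t ht).mul (hcos t)).sub ((hRd t ht).mul (hsin t))
      have hmono : MonotoneOn φ (Icc 0 t₁) := by
        apply monotoneOn_of_deriv_nonneg (convex_Icc 0 t₁)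
        · exact fun t ht => (hφd t (hsub ht)).continuousAt.continuousWithinAt
        · intro t ht
          rw [interior_Icc] at ht
          exact (hφd t (hsub (Ioo_subset_Icc_self ht))).differentiableAt.differentiableWithinAt
        · intro t ht
          rw [interior_Icc] at ht
          have htm : t ∈ Icc (0:ℝ) T := hsub (Ioo_subset_Icc_self ht)
          rw [(hφd t htm).deriv]
          -- nonnegativity
          have hu0 : 0 ≤ k * (t₁ - t) := mul_nonneg hk (by linarith [ht.2])
          have huT : k * (t₁ - t) ≤ k * T := by
            apply mul_le_mul_of_nonneg_left _ hk
            linarith [ht.1, ht₁T]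
          have hcn : 0 ≤ Real.cos (k * (t₁ - t)) := by
            apply Real.cos_nonneg_of_mem_Icc
            constructor
            · linarith [Real.pi_div_two_pos]
            · linarith
          have hsn : 0 ≤ Real.sin (k * (t₁ - t)) := by
            apply Real.sin_nonneg_of_nonneg_of_le_pi hu0
            linarith [Real.pi_div_two_pos, Real.pi_pos]
          have hfn : 0 ≤ f t := hfpos t (Ioo_subset_Icc_self ht)
          have hQR : Real.sqrt (1 - f t ^ 2) ≤ R t := by
            apply Real.sqrt_le_sqrt
            nlinarith
          have hRp : 0 < R t := hRpos t htm
          have halg := auxAlg k (f t) (D t) (Real.sqrt (1 - f t ^ 2)) (R t)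
            (Real.cos (k * (t₁ - t))) (Real.sin (k * (t₁ - t))) hk hfn
            (Real.sqrt_nonneg _) hQR hRp hcn hsn (hDb t htm)
          have heq : D t * Real.cos (k * (t₁ - t)) + f t * (k * Real.sin (k * (t₁ - t)))
              - ((-(2 * f t * D t)) / (2 * R t) * Real.sin (k * (t₁ - t))
                + R t * (-(k * Real.cos (k * (t₁ - t)))))
              = D t * (Real.cos (k * (t₁ - t)) + f t * Real.sin (k * (t₁ - t)) / R t)
                + k * (f t * Real.sin (k * (t₁ - t)) + R t * Real.cos (k * (t₁ - t))) := by
            field_simp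
            ring
          rw [heq]
          exact halg
      have h0mem : (0:ℝ) ∈ Icc (0:ℝ) t₁ := left_mem_Icc.2 ht₁0
      have ht₁mem : t₁ ∈ Icc (0:ℝ) t₁ := right_mem_Icc.2 ht₁0
      have hm := hmono h0mem ht₁mem ht₁0
      have hφ0 : φ 0 = Real.cos (k * t₁) - ε * Real.sin (k * t₁) := by
        simp only [hφdef, hRdef, hf0, sub_zero, one_pow]
        rw [show (1:ℝ) - 1 + ε ^ 2 = ε ^ 2 by ring, Real.sqrt_sq hε.le]
        ring
      have hφt₁ : φ t₁ = f t₁ := by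
        simp [hφdef]
      rw [hφ0, hφt₁] at hm
      have hsle : Real.sin (k * t₁) ≤ 1 := Real.sin_le_one _
      nlinarith
    have hck : Real.cos (k * t₁) ≤ f t₁ := by
      by_contra hcc
      push_neg at hcc
      have := key ((Real.cos (k * t₁) - f t₁) / 2) (by linarith)
      linarith
    have hle : k * T ≤ k * t₁ := by
      by_contra hgt
      push_neg at hgt
      have hlt2 := Real.strictAntiOn_cos
        ⟨mul_nonneg hk ht₁0, by linarith [Real.pi_div_two_pos, Real.pi_pos]⟩
        ⟨hkT0.le, by linarith [Real.pi_div_two_pos, Real.pi_pos]⟩ hgt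
      rw [hft₁] at hck
      linarith
    have hT₁T : T ≤ t₁ := le_of_mul_le_mul_left hle hkpos
    have heq : t₁ = T := le_antisymm ht₁T hT₁T
    rw [heq] at hft₁
    rw [hft₁] at hcon
    exact absurd hcon (lt_irrefl _)



/-- Computable speed limit for a time-independent Liouvillian: `arccos|⟨v 0, v T⟩| ≤ T ‖L‖`,
following from Theorem 1 and the bound `ΔL ≤ ‖L‖_op`. -/
theorem speed_limit_operator_norm
    {E : Type*} [NormedAddCommGroup E] [InnerProductSpace ℂ E] [FiniteDimensional ℂ E]
    (T : ℝ) (hT : 0 < T) (L : E →L[ℂ] E) (v : ℝ → E)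
    (hnorm : ∀ t ∈ Set.Icc (0 : ℝ) T, ‖v t‖ = 1)
    (hode : ∀ t ∈ Set.Icc (0 : ℝ) T,
      HasDerivAt v (L (v t) - (inner ℂ (v t) (L (v t)) : ℂ).re • v t) t) :
    Real.arccos ‖(inner ℂ (v 0) (v T) : ℂ)‖ ≤ T * ‖L‖ := by
  letI : InnerProductSpace ℝ E := InnerProductSpace.complexToReal
  have h0T : (0:ℝ) ∈ Set.Icc (0:ℝ) T := Set.left_mem_Icc.2 hT.le
  have hTT : T ∈ Set.Icc (0:ℝ) T := Set.right_mem_Icc.2 hT.le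
  have hknn : (0:ℝ) ≤ ‖L‖ := norm_nonneg _
  rcases lt_or_ge (‖L‖ * T) (Real.pi / 2) with hcase | hcase
  · -- nontrivial case
    set f : ℝ → ℝ := fun t => (inner ℝ (v 0) (v t) : ℝ) with hfdef
    set D : ℝ → ℝ := fun t =>
      (inner ℝ (v 0) (L (v t) - (inner ℂ (v t) (L (v t)) : ℂ).re • v t) : ℝ) with hDdef
    have hre : ∀ x y : E, (inner ℝ x y : ℝ) = (inner ℂ x y : ℂ).re := fun x y => rfl
    have hd : ∀ t ∈ Set.Icc (0:ℝ) T, HasDerivAt f (D t) t := by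
      intro t ht
      have := (innerSL ℝ (v 0)).hasFDerivAt.comp_hasDerivAt t (hode t ht)
      exact this
    have hf0 : f 0 = 1 := by
      show (inner ℝ (v 0) (v 0) : ℝ) = 1
      rw [real_inner_self_eq_norm_sq, hnorm 0 h0T]
      norm_num
    have hb : ∀ t ∈ Set.Icc (0:ℝ) T, |f t| ≤ 1 := by
      intro t ht
      have := abs_real_inner_le_norm (v 0) (v t)
      rw [hnorm 0 h0T, hnorm t ht] at this
      simpa using this
    have hDb : ∀ t ∈ Set.Icc (0:ℝ) T, |D t| ≤ ‖L‖ * Real.sqrt (1 - f t ^ 2) := by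
      intro t ht
      set c : ℝ := (inner ℂ (v t) (L (v t)) : ℂ).re with hcdef
      set x : E := L (v t) - c • v t with hxdef
      have hcr : (inner ℝ (v t) (L (v t)) : ℝ) = c := rfl
      have horth : (inner ℝ (v t) x : ℝ) = 0 := by
        rw [hxdef, inner_sub_right, real_inner_smul_right, real_inner_self_eq_norm_sq,
          hnorm t ht, hcr]
        ring
      have hxn : ‖x‖ ≤ ‖L‖ := by
        have h1 : ‖x‖ ^ 2 = ‖L (v t)‖ ^ 2 - c ^ 2 := by
          rw [hxdef, norm_sub_sq_real, real_inner_smul_right, real_inner_comm, hcr,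
            norm_smul, hnorm t ht, Real.norm_eq_abs]
          rw [mul_one, sq_abs]
          ring
        have h2 : ‖L (v t)‖ ≤ ‖L‖ := by
          have h3 := L.le_opNorm (v t)
          rw [hnorm t ht, mul_one] at h3
          exact h3
        nlinarith [norm_nonneg x, norm_nonneg (L (v t))]
      have haux := auxA (v 0) (v t) x (hnorm 0 h0T) (hnorm t ht) horth
      calc |D t| = |(inner ℝ (v 0) x : ℝ)| := rfl
        _ ≤ ‖x‖ * Real.sqrt (1 - (inner ℝ (v 0) (v t) : ℝ) ^ 2) := haux
        _ ≤ ‖L‖ * Real.sqrt (1 - f t ^ 2) :=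
            mul_le_mul_of_nonneg_right hxn (Real.sqrt_nonneg _)
    have hmain := auxB ‖L‖ T hknn hT hcase f D hf0 hd hDb hb
    have hfT : f T ≤ ‖(inner ℂ (v 0) (v T) : ℂ)‖ := by
      calc f T = (inner ℂ (v 0) (v T) : ℂ).re := rfl
        _ ≤ ‖(inner ℂ (v 0) (v T) : ℂ)‖ := Complex.re_le_norm _
    have hcosle : Real.cos (‖L‖ * T) ≤ ‖(inner ℂ (v 0) (v T) : ℂ)‖ := hmain.trans hfT
    have harccos : Real.arccos ‖(inner ℂ (v 0) (v T) : ℂ)‖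
        ≤ Real.arccos (Real.cos (‖L‖ * T)) := by
      rw [Real.arccos_eq_pi_div_two_sub_arcsin, Real.arccos_eq_pi_div_two_sub_arcsin]
      exact sub_le_sub_left (Real.monotone_arcsin hcosle) _
    rw [Real.arccos_cos (mul_nonneg hknn hT.le)
      (by linarith [Real.pi_div_two_pos, Real.pi_pos])] at harccos
    linarith [harccos, mul_comm T ‖L‖ ▸ harccos]
  · -- trivial case
    have h1 : Real.arccos ‖(inner ℂ (v 0) (v T) : ℂ)‖ ≤ Real.pi / 2 :=
      Real.arccos_le_pi_div_two.2 (norm_nonneg _)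
    calc Real.arccos ‖(inner ℂ (v 0) (v T) : ℂ)‖ ≤ Real.pi / 2 := h1
      _ ≤ ‖L‖ * T := hcase
      _ = T * ‖L‖ := mul_comm _ _
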